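/- Let a ≠ -1/2 and t ≠ -1/2 be real numbers with t ≠ 1. Define p = -(t^2+t+1)/(2t+1), q = (t^2+2t)/(2t+1), k = (2t^2+2t(a+1)+a+2)/(t-1), b(t) = -(t^4+(a+4)t^3+(5a+4)t^2+4(a+1)t+2a+2)/(2t+1), c(t) = (2t^4+2(a+1)t^3+(2a+4)t^2+(3a+4)t-a)/(2t+1). Then for all real x, y, z: w_4 + a·w_3 + b(t)·w_2 + c(t)·w_1 = X^2+Y^2+Z^2 + k(XY+YZ+ZX), where X = x^2+pxy+pxz+qyz, Y = y^2+pyz+pyx+qzx, Z = z^2+pzx+pzy+qxy. -/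

import Mathlib

theorem stmt_7 (a t : ℝ) (ha : a ≠ -1/2) (ht : t ≠ -1/2) (ht1 : t ≠ 1)
    (p q k bt ct : ℝ)
    (hp : p = -(t^2+t+1)/(2*t+1)) (hq : q = (t^2+2*t)/(2*t+1))
    (hk : k = (2*t^2+2*t*(a+1)+a+2)/(t-1))
    (hbt : bt = -(t^4+(a+4)*t^3+(5*a+4)*t^2+4*(a+1)*t+2*a+2)/(2*t+1))
    (hct : ct = (2*t^4+2*(a+1)*t^3+(2*a+4)*t^2+(3*a+4)*t-a)/(2*t+1))
    (x y z : ℝ) :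
    (x^4+y^4+z^4) + a*(x^3*y+y^3*z+z^3*x+x*y^3+y*z^3+z*x^3) + bt*(x^2*y^2+y^2*z^2+z^2*x^2) + ct*(x*y*z*(x+y+z)) =
      (x^2+p*x*y+p*x*z+q*y*z)^2 + (y^2+p*y*z+p*y*x+q*z*x)^2 + (z^2+p*z*x+p*z*y+q*x*y)^2
      + k*((x^2+p*x*y+p*x*z+q*y*z)*(y^2+p*y*z+p*y*x+q*z*x)
         + (y^2+p*y*z+p*y*x+q*z*x)*(z^2+p*z*x+p*z*y+q*x*y)
         + (z^2+p*z*x+p*z*y+q*x*y)*(x^2+p*x*y+p*x*z+q*y*z)) := by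
  have h1 : 2*t+1 ≠ 0 := by intro h; apply ht; linarith
  have h2 : t-1 ≠ 0 := sub_ne_zero.mpr ht1
  subst hp hq hk hbt hct
  have h3 : t*2+1 ≠ 0 := by rw [mul_comm]; exact h1
  field_simp
  ring
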